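/- Quantum no-cloning theorem: there is no unitary operator U on H ⊗ H and fixed unit vector e ∈ H such that U(ψ ⊗ e) = ψ ⊗ ψ for all unit vectors ψ ∈ H, provided dim H ≥ 2. -/

import Mathlib

open scoped InnerProductSpace

/-- Quantum no-cloning: there is no unitary `U` on `H ⊗ H` (modelled as
`EuclideanSpace ℂ (Fin n × Fin n)`) and unit vector `e` with
`U (ψ ⊗ e) = ψ ⊗ ψ` for all unit vectors `ψ`, when `dim H = n ≥ 2`. -/
theorem no_cloning (n : ℕ) (hn : 2 ≤ n) :
    ¬ ∃ (U : EuclideanSpace ℂ (Fin n × Fin n) ≃ₗᵢ[ℂ] EuclideanSpace ℂ (Fin n × Fin n))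
        (e : EuclideanSpace ℂ (Fin n)), ‖e‖ = 1 ∧
        ∀ ψ : EuclideanSpace ℂ (Fin n), ‖ψ‖ = 1 →
          U (WithLp.toLp 2 (fun q : Fin n × Fin n => ψ q.1 * e q.2))
            = WithLp.toLp 2 (fun q : Fin n × Fin n => ψ q.1 * ψ q.2) := by
  rintro ⟨U, e, he, hU⟩
  have h0 : 0 < n := by omega
  have h1 : 1 < n := by omega
  set i0 : Fin n := ⟨0, h0⟩ with hi0
  set i1 : Fin n := ⟨1, h1⟩ with hi1
  have hne : i0 ≠ i1 := by simp [hi0, hi1, Fin.ext_iff]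
  set r : ℂ := (Real.sqrt 2 : ℂ)⁻¹ with hr
  have hs2 : Real.sqrt 2 ≠ 0 := by positivity
  have hr0 : r ≠ 0 := by simp [hr, hs2]
  have hr1 : r ≠ 1 := by
    rw [hr]
    intro h
    have h' : (Real.sqrt 2)⁻¹ = 1 := by exact_mod_cast h
    have h2 : Real.sqrt 2 = 1 := inv_eq_one.mp h'
    have := Real.sqrt_eq_one.mp h2
    norm_num at this
  set ψ : EuclideanSpace ℂ (Fin n) := WithLp.toLp 2 (fun i => if i = i0 then (1:ℂ) else 0) with hψ
  set χ : EuclideanSpace ℂ (Fin n) := WithLp.toLp 2 (fun i => if i = i0 then r else if i = i1 then r else 0) with hχ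
  have hψv : ∀ i, ψ i = if i = i0 then 1 else 0 := fun i => rfl
  have hχv : ∀ i, χ i = if i = i0 then r else if i = i1 then r else 0 := fun i => rfl
  have hrn : ‖r‖ ^ 2 = 1 / 2 := by
    rw [hr, norm_inv, Complex.norm_real, Real.norm_eq_abs,
      _root_.abs_of_nonneg (Real.sqrt_nonneg 2)]
    rw [← Real.sqrt_inv, Real.sq_sqrt (by norm_num)]
    norm_num
  have hψn : ‖ψ‖ = 1 := by
    rw [EuclideanSpace.norm_eq]
    have h : ∀ i, ‖ψ i‖ ^ 2 = if i = i0 then 1 else 0 := by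
      intro i; by_cases h : i = i0 <;> simp [hψv, h]
    have hs : ∑ i, ‖ψ i‖ ^ 2 = 1 := by
      rw [Finset.sum_congr rfl fun i _ => h i]; simp
    rw [hs, Real.sqrt_one]
  have hχn : ‖χ‖ = 1 := by
    rw [EuclideanSpace.norm_eq]
    have h : ∀ i, ‖χ i‖ ^ 2 = (if i = i0 then (1:ℝ)/2 else 0) + (if i = i1 then 1/2 else 0) := by
      have habs : ‖r‖ ^ 2 = 1 / 2 := by
        simpa using hrn
      intro i
      by_cases h : i = i0
      · simp [hχv, h, hne, hne.symm, habs]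
      · by_cases h' : i = i1 <;> simp [hχv, h, h', hne, hne.symm, habs]
    have hs : ∑ i, ‖χ i‖ ^ 2 = 1 := by
      rw [Finset.sum_congr rfl fun i _ => h i, Finset.sum_add_distrib]
      simp; norm_num
    rw [hs, Real.sqrt_one]
  have hψχ : ∑ i, (starRingEnd ℂ) (ψ i) * χ i = r := by
    have h : ∀ i, (starRingEnd ℂ) (ψ i) * χ i = if i = i0 then r else 0 := by
      intro i; by_cases h : i = i0 <;> simp [hψv, hχv, h]
    rw [Finset.sum_congr rfl fun i _ => h i]; simp
  have hee : ∑ j, (starRingEnd ℂ) (e j) * e j = 1 := by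
    have h : (⟪e, e⟫_ℂ) = ((1:ℝ) : ℂ) := by
      rw [inner_self_eq_norm_sq_to_K, he]; norm_num
    simp only [PiLp.inner_apply, RCLike.inner_apply, Complex.ofReal_one] at h
    rw [← h]; exact Finset.sum_congr rfl fun j _ => mul_comm _ _
  have hinner := U.inner_map_map (𝕜 := ℂ)
    (WithLp.toLp 2 (fun q : Fin n × Fin n => ψ q.1 * e q.2)) (WithLp.toLp 2 (fun q : Fin n × Fin n => χ q.1 * e q.2))
  rw [hU ψ hψn, hU χ hχn] at hinner
  simp only [PiLp.inner_apply, RCLike.inner_apply, mul_comm (χ _ * _)] at hinner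
  have hA : ∑ q : Fin n × Fin n, (starRingEnd ℂ) (ψ q.1 * ψ q.2) * (χ q.1 * χ q.2)
      = (∑ i, (starRingEnd ℂ) (ψ i) * χ i) * (∑ j, (starRingEnd ℂ) (ψ j) * χ j) := by
    rw [Fintype.sum_prod_type]
    calc ∑ i, ∑ j, (starRingEnd ℂ) (ψ (i, j).1 * ψ (i, j).2) * (χ (i, j).1 * χ (i, j).2)
        = ∑ i, ∑ j, ((starRingEnd ℂ) (ψ i) * χ i) * ((starRingEnd ℂ) (ψ j) * χ j) :=
          Finset.sum_congr rfl fun i _ => Finset.sum_congr rfl fun j _ => by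
            simp only [map_mul]; ring
      _ = _ := by rw [← Finset.sum_mul_sum]
  have hB : ∑ q : Fin n × Fin n, (starRingEnd ℂ) (ψ q.1 * e q.2) * (χ q.1 * e q.2)
      = (∑ i, (starRingEnd ℂ) (ψ i) * χ i) * (∑ j, (starRingEnd ℂ) (e j) * e j) := by
    rw [Fintype.sum_prod_type]
    calc ∑ i, ∑ j, (starRingEnd ℂ) (ψ (i, j).1 * e (i, j).2) * (χ (i, j).1 * e (i, j).2)
        = ∑ i, ∑ j, ((starRingEnd ℂ) (ψ i) * χ i) * ((starRingEnd ℂ) (e j) * e j) :=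
          Finset.sum_congr rfl fun i _ => Finset.sum_congr rfl fun j _ => by
            simp only [map_mul]; ring
      _ = _ := by rw [← Finset.sum_mul_sum]
  rw [hA, hB, hψχ, hee, mul_one] at hinner
  exact hr1 (mul_left_cancel₀ hr0 (by rw [mul_one, hinner]))
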